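/- Let f ∈ C¹(ℝ) be bounded with bounded derivative and f̂ its Engquist–Osher flux, let k ∈ L^∞(ℝ) ∩ BV(ℝ) with cell averages k_{j+1/2}, let (u^n_j) be grid values vanishing for |j| sufficiently large, for 0 ≤ n ≤ N−1 with T = NΔt, and let f̂^n_{j+1/2} denote the sign-adapted numerical flux. Let φ ∈ C¹(ℝ × [0,T]) with ∂_x φ ∈ L²(ℝ × (0,T)), and set Φ_j(t) = ∫_{x_{j−1/2}}^{x_{j+1/2}} φ(x,t) dx. Then there is an absolute constant C such that |Σ_{n=0}^{N−1} Σ_{j∈ℤ} ∫_{t^n}^{t^{n+1}} (f(u^n_j) − f̂^n_{j+1/2})·k_{j+1/2}·D₊Φ_j(t) dt| ≤ C·‖k‖_∞·‖f′‖_∞·Δx^{1/2}·(Δx²Δt Σ_{n=0}^{N−1} Σ_{j∈ℤ} (D₋u^n_j)²)^{1/2}·‖∂_x φ‖_{L²(ℝ×(0,T))}. -/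

import Mathlib

open MeasureTheory Filter Set

noncomputable section

/-- The sup-norm `‖g‖_∞` of a function `g : ℝ → ℝ`. -/
def supNorm (g : ℝ → ℝ) : ℝ := ⨆ x, |g x|

/-- The total variation `TV(k)` of a function `k : ℝ → ℝ`. -/
def totalVar (k : ℝ → ℝ) : ℝ := (eVariationOn k Set.univ).toReal

/-- The Engquist–Osher numerical flux associated to `f`. -/
def eoFlux (f : ℝ → ℝ) (u v : ℝ) : ℝ :=
  (f u + f v) / 2 - (∫ s in u..v, |deriv f s|) / 2

/-- The cell averages `k_{j+1/2} = (1/Δx) ∫_{x_j}^{x_{j+1}} k`. -/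
def kAvg (k : ℝ → ℝ) (dx : ℝ) (j : ℤ) : ℝ :=
  (1 / dx) * ∫ x in ((j : ℝ) * dx)..((j : ℝ) * dx + dx), k x

/-- The sign-adapted Engquist–Osher flux `f̂_{j+1/2}`, with arguments transposed when the
coefficient `kh j` is negative. -/
def signFlux (f : ℝ → ℝ) (kh : ℤ → ℝ) (v : ℤ → ℝ) (j : ℤ) : ℝ :=
  if 0 ≤ kh j then eoFlux f (v j) (v (j + 1)) else eoFlux f (v (j + 1)) (v j)

/-- The numerical flux `h_{j+1/2} = k_{j+1/2} f̂_{j+1/2}`. -/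
def numFlux (f k : ℝ → ℝ) (dx : ℝ) (v : ℤ → ℝ) (j : ℤ) : ℝ :=
  kAvg k dx j * signFlux f (kAvg k dx) v j

/-- Backward difference `D₋v_j = (v_j - v_{j-1})/Δx`. -/
def Dm (dx : ℝ) (v : ℤ → ℝ) (j : ℤ) : ℝ := (v j - v (j - 1)) / dx

/-- Forward difference `D₊v_j = (v_{j+1} - v_j)/Δx`. -/
def Dp (dx : ℝ) (v : ℤ → ℝ) (j : ℤ) : ℝ := (v (j + 1) - v j) / dx

/-- The square of the discrete `ℓ²` norm: `‖v‖² = Δx Σ_j v_j²`. -/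
def l2sq (dx : ℝ) (v : ℤ → ℝ) : ℝ := dx * ∑' j : ℤ, (v j) ^ 2

/-- The fully-discrete capillarity scheme
`D₊ᵗu^n_j + D₋h^n_{j+1/2} = βΔx·D₊D₋u^n_j + γμ(Δx)·D₊ᵗD₊D₋u^n_j`
with initial data the cell averages of `u0`. -/
def capScheme (f k u0 : ℝ → ℝ) (β γ μ dx dt : ℝ) (u : ℕ → ℤ → ℝ) : Prop :=
  (∀ j : ℤ, u 0 j =
      (1 / dx) * ∫ x in ((j : ℝ) * dx - dx / 2)..((j : ℝ) * dx + dx / 2), u0 x) ∧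
  ∀ (n : ℕ) (j : ℤ),
    (u (n + 1) j - u n j) / dt + Dm dx (numFlux f k dx (u n)) j
      = β * dx * Dp dx (Dm dx (u n)) j
        + γ * μ * ((Dp dx (Dm dx (u (n + 1))) j - Dp dx (Dm dx (u n)) j) / dt)

/-- The fully-discrete diffusive–dispersive scheme
`D₊ᵗu^n_j + D₋h^n_{j+1/2} = βΔx·D₊D₋u^n_j + γμ(Δx)·D₊D₋D₋u^n_j`
with initial data the cell averages of `u0`. -/
def ddScheme (f k u0 : ℝ → ℝ) (β γ μ dx dt : ℝ) (u : ℕ → ℤ → ℝ) : Prop :=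
  (∀ j : ℤ, u 0 j =
      (1 / dx) * ∫ x in ((j : ℝ) * dx - dx / 2)..((j : ℝ) * dx + dx / 2), u0 x) ∧
  ∀ (n : ℕ) (j : ℤ),
    (u (n + 1) j - u n j) / dt + Dm dx (numFlux f k dx (u n)) j
      = β * dx * Dp dx (Dm dx (u n)) j
        + γ * μ * Dp dx (Dm dx (Dm dx (u n))) j

/-- The CFL condition for the capillarity scheme. -/
def cflCap (f k : ℝ → ℝ) (β γ μ dx dt δ : ℝ) : Prop :=
  max (2 * max (supNorm f) (max (supNorm (deriv f)) (supNorm k)) + (dt / dx) / 2)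
      ((dt / dx) / 2 * (1 + β * dx ^ 2 / (γ * μ)))
    ≤ min (1 - δ) (β - δ)

/-- The explicit CFL condition for the diffusive–dispersive scheme. -/
def cflDD (f k : ℝ → ℝ) (β γ μ dx dt δ : ℝ) : Prop :=
  max (2 * (dt / dx) * (β ^ 2 * dx ^ 2 / (γ * μ) + 2 * γ * μ / dx ^ 2))
      (8 * (dt / dx) * supNorm k ^ 2 * supNorm (deriv f) ^ 2)
    ≤ min (1 - δ) (β - δ)

/-- The piecewise-constant interpolant `u_{Δx}(x,t) = u^n_j` on
`[x_{j-1/2}, x_{j+1/2}) × [t^n, t^{n+1})`. -/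
def pcInterp (dx dt : ℝ) (u : ℕ → ℤ → ℝ) (p : ℝ × ℝ) : ℝ :=
  u (⌊p.2 / dt⌋.toNat) ⌊p.1 / dx + 1 / 2⌋

/-- Finite support of the grid function at each time level. -/
def finSupp (u : ℕ → ℤ → ℝ) : Prop :=
  ∀ n : ℕ, ∃ J : ℕ, ∀ j : ℤ, (J : ℤ) < |j| → u n j = 0

/-- The `i`-th open interval of the partition of `ℝ` induced by the points `ξ 0 < ⋯ < ξ (M-1)`. -/
def pieceSet (M : ℕ) (ξ : Fin M → ℝ) (i : Fin (M + 1)) : Set ℝ :=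
  {x | (∀ m : Fin M, (m : ℕ) < (i : ℕ) → ξ m < x) ∧ (∀ m : Fin M, (i : ℕ) ≤ (m : ℕ) → x < ξ m)}

/-- `k` is piecewise Lipschitz: on each piece of the partition induced by `ξ`, it agrees with a
globally Lipschitz function (in particular it is Lipschitz on the closure of each piece, up to
redefining it at the partition points). -/
def piecewiseLip (M : ℕ) (ξ : Fin M → ℝ) (k : ℝ → ℝ) : Prop :=
  ∀ i : Fin (M + 1), ∃ (κ : ℝ → ℝ) (L : NNReal),
    LipschitzWith L κ ∧ ∀ x ∈ pieceSet M ξ i, k x = κ x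

end

open intervalIntegral

section CEB
lemma supNorm_ub {g : ℝ → ℝ} (hb : ∃ C, ∀ x, |g x| ≤ C) (x : ℝ) : |g x| ≤ supNorm g := by
  obtain ⟨C, hC⟩ := hb
  exact le_ciSup ⟨C, by rintro _ ⟨y, rfl⟩; exact hC y⟩ x

lemma supNorm_nonneg' (g : ℝ → ℝ) : 0 ≤ supNorm g := Real.iSup_nonneg fun x => abs_nonneg _

lemma interval_cs {h : ℝ → ℝ} (hc : Continuous h) {a b : ℝ} (hab : a ≤ b) :
    |∫ x in a..b, h x| ≤ Real.sqrt (b - a) * Real.sqrt (∫ x in a..b, (h x)^2) := by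
  have h1 : |∫ x in a..b, h x| ≤ ∫ x in a..b, |h x| :=
    intervalIntegral.abs_integral_le_integral_abs hab
  have key : (∫ x in Set.Ioc a b, |h x|) ≤
      Real.sqrt (b - a) * Real.sqrt (∫ x in Set.Ioc a b, (h x)^2) := by
    obtain ⟨C, hC⟩ : ∃ C, ∀ x ∈ Set.Icc a b, |h x| ≤ C := by
      obtain ⟨C, hC⟩ := (isCompact_Icc (a := a) (b := b)).exists_bound_of_continuousOn
        hc.continuousOn
      exact ⟨C, fun x hx => hC x hx⟩
    set μ := volume.restrict (Set.Ioc a b) with hμ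
    have hfin : IsFiniteMeasure μ := by
      constructor
      rw [hμ, Measure.restrict_apply_univ]
      exact measure_Ioc_lt_top
    have hmemf : MemLp (fun x => |h x|) (ENNReal.ofReal 2) μ := by
      refine MemLp.of_bound (hc.abs.aestronglyMeasurable) C ?_
      rw [hμ, ae_restrict_iff' measurableSet_Ioc]
      exact Filter.Eventually.of_forall fun x hx => by
        simpa [abs_abs] using hC x (Set.Ioc_subset_Icc_self hx)
    have hmemg : MemLp (fun _ : ℝ => (1 : ℝ)) (ENNReal.ofReal 2) μ := memLp_const 1
    have hconj : Real.HolderConjugate 2 2 := Real.holderConjugate_iff.mpr ⟨one_lt_two, by norm_num⟩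
    have hH := integral_mul_le_Lp_mul_Lq_of_nonneg hconj
      (Filter.Eventually.of_forall fun x => abs_nonneg (h x))
      (Filter.Eventually.of_forall fun _ => zero_le_one) hmemf hmemg
    simp only [mul_one] at hH
    have e1 : (∫ _x, ((1:ℝ) ^ (2:ℝ)) ∂μ) = b - a := by
      simp [hμ, Real.volume_Ioc, ENNReal.toReal_ofReal (sub_nonneg.2 hab), hab]
    have e2 : (∫ x, |h x| ^ (2:ℝ) ∂μ) = ∫ x, (h x)^2 ∂μ := by
      refine integral_congr_ae (Filter.Eventually.of_forall fun x => ?_)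
      simp [Real.rpow_natCast, sq_abs]
    rw [e1, e2] at hH
    have hnn : 0 ≤ ∫ x, (h x)^2 ∂μ := integral_nonneg fun x => sq_nonneg _
    calc (∫ x in Set.Ioc a b, |h x|) ≤ (∫ x, (h x)^2 ∂μ) ^ (1/(2:ℝ)) * (b - a) ^ (1/(2:ℝ)) := hH
    _ = Real.sqrt (b - a) * Real.sqrt (∫ x in Set.Ioc a b, (h x)^2) := by
        rw [← Real.sqrt_eq_rpow, ← Real.sqrt_eq_rpow, mul_comm]
  calc |∫ x in a..b, h x| ≤ ∫ x in a..b, |h x| := h1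
  _ = ∫ x in Set.Ioc a b, |h x| := intervalIntegral.integral_of_le hab
  _ ≤ Real.sqrt (b - a) * Real.sqrt (∫ x in Set.Ioc a b, (h x)^2) := key
  _ = Real.sqrt (b - a) * Real.sqrt (∫ x in a..b, (h x)^2) := by
      rw [intervalIntegral.integral_of_le hab]

lemma eo_bound {f : ℝ → ℝ} (hf : ContDiff ℝ 1 f) (hb : ∃ C, ∀ x, |deriv f x| ≤ C)
    (kh : ℤ → ℝ) (v : ℤ → ℝ) (j : ℤ) :
    |f (v j) - signFlux f kh v j| ≤ supNorm (deriv f) * |v (j+1) - v j| := by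
  set M := supNorm (deriv f) with hMdef
  have hM : ∀ x, |deriv f x| ≤ M := supNorm_ub hb
  have hder : Continuous (deriv f) := hf.continuous_deriv le_rfl
  set u := v j
  set w := v (j + 1)
  have hfw : f w - f u = ∫ s in u..w, deriv f s :=
    (integral_deriv_eq_sub (fun x _ => (hf.differentiable one_ne_zero).differentiableAt)
      (hder.intervalIntegrable u w)).symm
  have h1 : |f u - f w| ≤ M * |w - u| := by
    rw [abs_sub_comm, hfw]
    simpa [Real.norm_eq_abs] using
      intervalIntegral.norm_integral_le_of_norm_le_const
        (f := deriv f) (a := u) (b := w) (C := M) (fun x _ => by simpa using hM x)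
  have h2 : abs (∫ s in u..w, |deriv f s|) ≤ M * |w - u| := by
    simpa [Real.norm_eq_abs] using
      intervalIntegral.norm_integral_le_of_norm_le_const
        (f := fun s => |deriv f s|) (a := u) (b := w) (C := M)
        (fun x _ => by simpa [abs_abs] using hM x)
  unfold signFlux
  split_ifs
  · have he : f u - eoFlux f u w = (f u - f w)/2 + (∫ s in u..w, |deriv f s|)/2 := by
      unfold eoFlux; ring
    rw [he]
    calc |(f u - f w)/2 + (∫ s in u..w, |deriv f s|)/2|
        ≤ |(f u - f w)/2| + |(∫ s in u..w, |deriv f s|)/2| := abs_add_le _ _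
      _ = |f u - f w|/2 + (abs (∫ s in u..w, |deriv f s|))/2 := by rw [abs_div, abs_div]; norm_num
      _ ≤ M * |w - u| := by linarith
  · have hsymm : (∫ s in w..u, |deriv f s|) = -∫ s in u..w, |deriv f s| :=
      intervalIntegral.integral_symm u w
    have he : f u - eoFlux f w u = (f u - f w)/2 - (∫ s in u..w, |deriv f s|)/2 := by
      unfold eoFlux; rw [hsymm]; ring
    rw [he]
    calc |(f u - f w)/2 - (∫ s in u..w, |deriv f s|)/2|
        ≤ |(f u - f w)/2| + |(∫ s in u..w, |deriv f s|)/2| := abs_sub _ _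
      _ = |f u - f w|/2 + (abs (∫ s in u..w, |deriv f s|))/2 := by rw [abs_div, abs_div]; norm_num
      _ ≤ M * |w - u| := by linarith

lemma kAvg_bound {k : ℝ → ℝ} (hb : ∃ C, ∀ x, |k x| ≤ C) {dx : ℝ} (hdx : 0 < dx) (j : ℤ) :
    |kAvg k dx j| ≤ supNorm k := by
  have h := intervalIntegral.norm_integral_le_of_norm_le_const
    (f := k) (a := (j:ℝ)*dx) (b := (j:ℝ)*dx+dx) (C := supNorm k)
    (fun x _ => by simpa using supNorm_ub hb x)
  have he : |(j:ℝ)*dx + dx - (j:ℝ)*dx| = dx := by rw [show (j:ℝ)*dx + dx - (j:ℝ)*dx = dx by ring, abs_of_pos hdx]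
  rw [he, Real.norm_eq_abs] at h
  unfold kAvg
  rw [abs_mul, abs_of_pos (by positivity : (0:ℝ) < 1/dx)]
  calc 1/dx * |∫ x in ((j:ℝ)*dx)..((j:ℝ)*dx+dx), k x| ≤ 1/dx * (supNorm k * dx) := by
        apply mul_le_mul_of_nonneg_left h (by positivity)
    _ = supNorm k := by field_simp

end CEB

section PHI
variable {φ : ℝ × ℝ → ℝ}

lemma slice_hasDerivAt (hφ : ContDiff ℝ 1 φ) (y t : ℝ) :
    HasDerivAt (fun z => φ (z, t)) (fderiv ℝ φ (y, t) (1, 0)) y := by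
  have h1 : HasFDerivAt φ (fderiv ℝ φ (y, t)) (y, t) :=
    ((hφ.differentiable one_ne_zero) (y, t)).hasFDerivAt
  have h2 : HasDerivAt (fun z : ℝ => (z, t)) ((1:ℝ), (0:ℝ)) y :=
    (hasDerivAt_id y).prodMk (hasDerivAt_const y t)
  exact h1.comp_hasDerivAt y h2

lemma g_cont (hφ : ContDiff ℝ 1 φ) :
    Continuous (fun p : ℝ × ℝ => deriv (fun z => φ (z, p.2)) p.1) := by
  have he : (fun p : ℝ × ℝ => deriv (fun z => φ (z, p.2)) p.1)
      = fun p : ℝ × ℝ => fderiv ℝ φ p ((1:ℝ), (0:ℝ)) := by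
    funext p
    have := (slice_hasDerivAt hφ p.1 p.2).deriv
    simpa using this
  rw [he]
  exact (hφ.continuous_fderiv one_ne_zero).clm_apply continuous_const

lemma slice_ftc (hφ : ContDiff ℝ 1 φ) (t a b : ℝ) :
    φ (b, t) - φ (a, t) = ∫ y in a..b, deriv (fun z => φ (z, t)) y := by
  refine (integral_deriv_eq_sub (fun x _ => (slice_hasDerivAt hφ x t).differentiableAt) ?_).symm
  exact ((g_cont hφ).comp (continuous_id.prodMk continuous_const)).intervalIntegrable a b

lemma phi_diff_bound (hφ : ContDiff ℝ 1 φ) {dx : ℝ} (hdx : 0 < dx) (c t : ℝ) :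
    |(∫ x in (c+dx)..(c+dx+dx), φ (x, t)) - ∫ x in c..(c+dx), φ (x, t)|
      ≤ dx * Real.sqrt dx *
        Real.sqrt (∫ y in c..(c+2*dx), (deriv (fun z => φ (z, t)) y)^2) := by
  set g : ℝ → ℝ := fun y => deriv (fun z => φ (z, t)) y with hg
  have hgc : Continuous g := (g_cont hφ).comp (continuous_id.prodMk continuous_const)
  have hφc : Continuous fun x : ℝ => φ (x, t) :=
    hφ.continuous.comp (continuous_id.prodMk continuous_const)
  set A : ℝ := Real.sqrt (∫ y in c..(c+2*dx), (g y)^2) with hA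
  have hAnn : 0 ≤ A := Real.sqrt_nonneg _
  have step1 : (∫ x in (c+dx)..(c+dx+dx), φ (x, t)) = ∫ x in c..(c+dx), φ (x+dx, t) :=
    (intervalIntegral.integral_comp_add_right (fun x => φ (x, t)) dx).symm
  have step2 : (∫ x in (c+dx)..(c+dx+dx), φ (x, t)) - (∫ x in c..(c+dx), φ (x, t))
      = ∫ x in c..(c+dx), (φ (x+dx, t) - φ (x, t)) := by
    have hc1 : Continuous fun x : ℝ => φ (x + dx, t) :=
      hφ.continuous.comp ((continuous_id.add continuous_const).prodMk continuous_const)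
    rw [step1]
    exact (intervalIntegral.integral_sub (hc1.intervalIntegrable _ _)
      (hφc.intervalIntegrable _ _)).symm
  rw [step2]
  have key : ∀ x ∈ Set.uIoc c (c+dx), ‖φ (x+dx, t) - φ (x, t)‖ ≤ Real.sqrt dx * A := by
    intro x hx
    rw [Set.uIoc_of_le (by linarith)] at hx
    have hx1 : c ≤ x := le_of_lt hx.1
    have hx2 : x + dx ≤ c + 2*dx := by have := hx.2; linarith
    have hftc : φ (x+dx, t) - φ (x, t) = ∫ y in x..(x+dx), g y := slice_ftc hφ t x (x+dx)
    rw [Real.norm_eq_abs, hftc]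
    calc |∫ y in x..(x+dx), g y| ≤ Real.sqrt (x + dx - x) * Real.sqrt (∫ y in x..(x+dx), (g y)^2) :=
          interval_cs hgc (by linarith)
      _ ≤ Real.sqrt dx * A := by
          have h1 : Real.sqrt (x + dx - x) = Real.sqrt dx := by norm_num
          rw [h1]
          refine mul_le_mul_of_nonneg_left ?_ (Real.sqrt_nonneg _)
          refine Real.sqrt_le_sqrt ?_
          exact intervalIntegral.integral_mono_interval hx1 (by linarith) hx2
            (Filter.Eventually.of_forall fun y => sq_nonneg _)
            ((hgc.pow 2).intervalIntegrable _ _)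
  have hb := intervalIntegral.norm_integral_le_of_norm_le_const
    (f := fun x => φ (x+dx, t) - φ (x, t)) (a := c) (b := c+dx) (C := Real.sqrt dx * A) key
  rw [Real.norm_eq_abs, show c + dx - c = dx by ring, abs_of_pos hdx] at hb
  calc |∫ x in c..(c+dx), (φ (x+dx, t) - φ (x, t))| ≤ Real.sqrt dx * A * dx := hb
    _ = dx * Real.sqrt dx * A := by ring

end PHI

section SUMS

lemma finset_cs {ι : Type*} (s : Finset ι) (a b : ι → ℝ) :
    ∑ i ∈ s, a i * b i ≤ Real.sqrt (∑ i ∈ s, (a i)^2) * Real.sqrt (∑ i ∈ s, (b i)^2) := by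
  calc ∑ i ∈ s, a i * b i ≤ |∑ i ∈ s, a i * b i| := le_abs_self _
    _ = Real.sqrt ((∑ i ∈ s, a i * b i)^2) := (Real.sqrt_sq_eq_abs _).symm
    _ ≤ Real.sqrt ((∑ i ∈ s, (a i)^2) * ∑ i ∈ s, (b i)^2) :=
        Real.sqrt_le_sqrt (Finset.sum_mul_sq_le_sq_mul_sq s a b)
    _ = _ := Real.sqrt_mul (Finset.sum_nonneg fun i _ => sq_nonneg _) _

lemma sum_Ioc_le {h : ℝ → ℝ} (hc : Continuous h) (hnn : ∀ x, 0 ≤ h x)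
    {c : ℤ → ℝ} (hmono : StrictMono c) (F : Finset ℤ) {L R : ℝ}
    (hsub : ∀ j ∈ F, Set.Ioc (c j) (c (j+1)) ⊆ Set.Ioc L R) :
    ∑ j ∈ F, (∫ x in Set.Ioc (c j) (c (j+1)), h x) ≤ ∫ x in Set.Ioc L R, h x := by
  have hdisj : (F : Set ℤ).Pairwise (Function.onFun Disjoint fun j => Set.Ioc (c j) (c (j+1))) := by
    intro i _ j _ hij
    refine Set.Ioc_disjoint_Ioc.2 ?_
    rcases lt_or_gt_of_ne hij with hlt | hlt
    · calc min (c (i+1)) (c (j+1)) ≤ c (i+1) := min_le_left _ _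
        _ ≤ c j := hmono.monotone (by omega)
        _ ≤ max (c i) (c j) := le_max_right _ _
    · calc min (c (i+1)) (c (j+1)) ≤ c (j+1) := min_le_right _ _
        _ ≤ c i := hmono.monotone (by omega)
        _ ≤ max (c i) (c j) := le_max_left _ _
  rw [← MeasureTheory.integral_biUnion_finset F (fun j _ => measurableSet_Ioc) hdisj
    (fun j _ => hc.integrableOn_Ioc)]
  refine MeasureTheory.setIntegral_mono_set hc.integrableOn_Ioc
    (Filter.Eventually.of_forall fun x => hnn x) ?_
  refine (Set.iUnion₂_subset fun j hj => hsub j hj).eventuallyLE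

end SUMS

section FUB

lemma fubini_rect {G : ℝ × ℝ → ℝ} (hGc : Continuous G) (hnn : ∀ p, 0 ≤ G p)
    {L R T : ℝ} (hLR : L ≤ R) (hT : 0 ≤ T)
    (hint : MeasureTheory.IntegrableOn G (Set.univ ×ˢ Set.Ioo 0 T) volume) :
    (∫ t in Set.Ioo 0 T, (∫ x in Set.Ioc L R, G (x, t)))
      ≤ ∫ p in Set.univ ×ˢ Set.Ioo 0 T, G p := by
  have hK : IsCompact (Set.Icc L R ×ˢ Set.Icc 0 T) := isCompact_Icc.prod isCompact_Icc
  have hIK : MeasureTheory.IntegrableOn G (Set.Icc L R ×ˢ Set.Icc 0 T) volume :=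
    hGc.continuousOn.integrableOn_compact hK
  have hIQ : MeasureTheory.IntegrableOn G (Set.Ioc L R ×ˢ Set.Ioo 0 T) volume :=
    hIK.mono_set (Set.prod_mono Set.Ioc_subset_Icc_self Set.Ioo_subset_Icc_self)
  have hswap : (∫ t in Set.Ioo 0 T, ∫ x in Set.Ioc L R, G (x, t))
      = ∫ x in Set.Ioc L R, ∫ t in Set.Ioo 0 T, G (x, t) := by
    have hintsw : MeasureTheory.Integrable (Function.uncurry fun t x => G (x, t))
        ((volume.restrict (Set.Ioo 0 T)).prod (volume.restrict (Set.Ioc L R))) := by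
      rw [MeasureTheory.Measure.prod_restrict]
      have hKs : IsCompact (Set.Icc (0:ℝ) T ×ˢ Set.Icc L R) := isCompact_Icc.prod isCompact_Icc
      have : MeasureTheory.IntegrableOn (Function.uncurry fun t x => G (x, t))
          (Set.Icc (0:ℝ) T ×ˢ Set.Icc L R) (volume.prod volume) := by
        refine ContinuousOn.integrableOn_compact hKs ?_
        exact (hGc.comp continuous_swap).continuousOn
      exact this.mono_set (Set.prod_mono Set.Ioo_subset_Icc_self Set.Ioc_subset_Icc_self)
    exact MeasureTheory.integral_integral_swap hintsw
  rw [hswap]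
  have hprod : (∫ x in Set.Ioc L R, ∫ t in Set.Ioo 0 T, G (x, t))
      = ∫ p in Set.Ioc L R ×ˢ Set.Ioo 0 T, G p := by
    exact (MeasureTheory.setIntegral_prod G hIQ).symm
  rw [hprod]
  refine MeasureTheory.setIntegral_mono_set hint (Filter.Eventually.of_forall fun p => hnn p) ?_
  exact (Set.prod_mono (Set.subset_univ _) (le_refl _)).eventuallyLE

end FUB


/-- there is an absolute constant `C` bounding the consistency-error sum
`Σ_{n,j} ∫ (f(u^n_j) − f̂^n_{j+1/2}) k_{j+1/2} D₊Φ_j(t) dt` in terms of `‖k‖_∞`, `‖f′‖_∞`,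
`Δx^{1/2}`, the discrete space-time gradient, and the `L²` norm of `∂ₓφ`. -/
theorem consistency_error_bound :
    ∃ C : ℝ, 0 < C ∧
      ∀ (f k : ℝ → ℝ) (φ : ℝ × ℝ → ℝ) (u : ℕ → ℤ → ℝ) (dx dt T : ℝ) (N : ℕ),
        0 < dx → 0 < dt → T = N * dt →
        ContDiff ℝ 1 f → (∃ C', ∀ x, |f x| ≤ C') → (∃ C', ∀ x, |deriv f x| ≤ C') →
        (∃ C', ∀ x, |k x| ≤ C') → BoundedVariationOn k Set.univ →
        LocallyIntegrable k volume →
        finSupp u →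
        ContDiff ℝ 1 φ →
        MemLp (fun p : ℝ × ℝ => deriv (fun y => φ (y, p.2)) p.1) 2
          (volume.restrict (Set.univ ×ˢ Set.Ioo 0 T)) →
        |∑ n ∈ Finset.range N, ∑' j : ℤ,
            ∫ t in ((n : ℝ) * dt)..(((n : ℝ) + 1) * dt),
              (f (u n j) - signFlux f (kAvg k dx) (u n) j) * kAvg k dx j *
                (((∫ x in (((j : ℝ) + 1) * dx - dx / 2)..(((j : ℝ) + 1) * dx + dx / 2), φ (x, t)) -
                    ∫ x in ((j : ℝ) * dx - dx / 2)..((j : ℝ) * dx + dx / 2), φ (x, t)) / dx)|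
          ≤ C * supNorm k * supNorm (deriv f) * Real.sqrt dx *
              Real.sqrt (dx ^ 2 * dt *
                ∑ n ∈ Finset.range N, ∑' j : ℤ, (Dm dx (u n) j) ^ 2) *
              Real.sqrt (∫ p in Set.univ ×ˢ Set.Ioo 0 T,
                (deriv (fun y => φ (y, p.2)) p.1) ^ 2) := by
  refine ⟨2, two_pos, ?_⟩
  intro f k φ u dx dt T N hdx hdt hTdef hf hfb hdfb hkb hkbv hkli hfs hφ hφL2
  -- abbreviations
  set Mk := supNorm k with hMk
  set Mf := supNorm (deriv f) with hMfd
  have hMknn : 0 ≤ Mk := supNorm_nonneg' k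
  have hMfnn : 0 ≤ Mf := supNorm_nonneg' (deriv f)
  set g : ℝ → ℝ → ℝ := fun y t => deriv (fun z => φ (z, t)) y with hgdef
  have hgc : Continuous fun p : ℝ × ℝ => g p.1 p.2 := g_cont hφ
  have hgsqc : Continuous fun p : ℝ × ℝ => (g p.1 p.2) ^ 2 := hgc.pow 2
  set c : ℤ → ℝ := fun j => (j : ℝ) * dx - dx / 2 with hcdef
  have hcmono : StrictMono c := by
    intro a b hab
    simp only [hcdef]
    have : (a : ℝ) < (b : ℝ) := by exact_mod_cast hab
    nlinarith
  -- support
  choose Jf hJf using hfs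
  set J : ℕ := (Finset.range N).sup Jf with hJdef
  have hzero : ∀ n, n < N → ∀ j : ℤ, (J : ℤ) < |j| → u n j = 0 := by
    intro n hn j hj
    refine hJf n j (lt_of_le_of_lt ?_ hj)
    exact_mod_cast Finset.le_sup (Finset.mem_range.2 hn)
  set F : Finset ℤ := Finset.Icc (-(J : ℤ) - 1) ((J : ℤ) + 1) with hFdef
  set L : ℝ := c (-(J : ℤ) - 1) with hLdef
  set R : ℝ := c ((J : ℤ) + 3) with hRdef
  have hLR : L ≤ R := (hcmono.monotone (by omega))
  have hT0 : 0 ≤ T := by rw [hTdef]; positivity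
  -- auxiliary functions
  set A : ℤ → ℝ → ℝ := fun j t => Real.sqrt (∫ y in (c j)..(c j + 2 * dx), (g y t) ^ 2)
    with hAdef
  have hwc : ∀ a b : ℝ, Continuous fun t => ∫ y in a..b, (g y t) ^ 2 := by
    intro a b
    exact intervalIntegral.continuous_parametric_intervalIntegral_of_continuous'
      (f := fun t y => (g y t) ^ 2) (by exact hgsqc.comp continuous_swap) a b
  have hAc : ∀ j : ℤ, Continuous (A j) := by
    intro j
    exact Real.continuous_sqrt.comp (hwc _ _)
  have hAnn : ∀ j t, 0 ≤ A j t := fun j t => Real.sqrt_nonneg _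
  have hPhic : ∀ a b : ℝ, Continuous fun t => ∫ x in a..b, φ (x, t) := by
    intro a b
    exact intervalIntegral.continuous_parametric_intervalIntegral_of_continuous'
      (f := fun t x => φ (x, t)) (by exact hφ.continuous.comp continuous_swap) a b
  set W : ℝ → ℝ := fun t => ∫ x in L..R, (g x t) ^ 2 with hWdef
  have hWc : Continuous W := hwc L R
  have hWnn : ∀ t, 0 ≤ W t := fun t =>
    intervalIntegral.integral_nonneg hLR fun x _ => sq_nonneg _
  set B : ℕ → ℤ → ℝ := fun n j =>
    ∫ t in ((n : ℝ) * dt)..(((n : ℝ) + 1) * dt), (∫ y in (c j)..(c j + 2 * dx), (g y t) ^ 2)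
    with hBdef
  have htle : ∀ n : ℕ, (n : ℝ) * dt ≤ ((n : ℝ) + 1) * dt := by
    intro n; nlinarith [hdt.le]
  have hBnn : ∀ n j, 0 ≤ B n j := by
    intro n j
    refine intervalIntegral.integral_nonneg (htle n) fun t _ => ?_
    exact intervalIntegral.integral_nonneg (by linarith) fun y _ => sq_nonneg _
  -- the L² integral of ∂ₓφ
  set I0 : ℝ := ∫ p in Set.univ ×ˢ Set.Ioo 0 T, (deriv (fun y => φ (y, p.2)) p.1) ^ 2 with hI0def
  have hI0nn : 0 ≤ I0 := by
    rw [hI0def]; exact MeasureTheory.integral_nonneg fun p => sq_nonneg _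
  have hGint : MeasureTheory.IntegrableOn (fun p : ℝ × ℝ => (g p.1 p.2) ^ 2)
      (Set.univ ×ˢ Set.Ioo 0 T) volume := hφL2.integrable_sq
  -- the term
  set Term : ℕ → ℤ → ℝ := fun n j =>
    ∫ t in ((n : ℝ) * dt)..(((n : ℝ) + 1) * dt),
      (f (u n j) - signFlux f (kAvg k dx) (u n) j) * kAvg k dx j *
        (((∫ x in (((j : ℝ) + 1) * dx - dx / 2)..(((j : ℝ) + 1) * dx + dx / 2), φ (x, t)) -
            ∫ x in ((j : ℝ) * dx - dx / 2)..((j : ℝ) * dx + dx / 2), φ (x, t)) / dx)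
    with hTermdef
  -- collapse the tsum
  have hcollapse : ∀ n ∈ Finset.range N, (∑' j : ℤ, Term n j) = ∑ j ∈ F, Term n j := by
    intro n hn
    refine tsum_eq_sum ?_
    intro j hj
    have hj' : ¬(-(J : ℤ) - 1 ≤ j ∧ j ≤ (J : ℤ) + 1) := by
      simpa [hFdef, Finset.mem_Icc] using hj
    have h0 : u n j = 0 := by
      refine hzero n (Finset.mem_range.1 hn) j ?_
      rw [Int.abs_eq_natAbs]; omega
    have h1 : u n (j + 1) = 0 := by
      refine hzero n (Finset.mem_range.1 hn) (j + 1) ?_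
      rw [Int.abs_eq_natAbs]; omega
    have hsf : signFlux f (kAvg k dx) (u n) j = f (u n j) := by
      unfold signFlux eoFlux
      rw [h0, h1]
      split_ifs <;> simp
    simp [hTermdef, hsf]
  -- pointwise term bound
  have hTermBound : ∀ n ∈ Finset.range N, ∀ j ∈ F,
      |Term n j| ≤ (Mk * Mf * Real.sqrt dx) *
        (|u n (j + 1) - u n j| * ∫ t in ((n : ℝ) * dt)..(((n : ℝ) + 1) * dt), A j t) := by
    intro n hn j hjF
    have htn : (n : ℝ) * dt ≤ ((n : ℝ) + 1) * dt := htle n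
    have e1 : ((j : ℝ) + 1) * dx - dx / 2 = c j + dx := by simp only [hcdef]; ring
    have e2 : ((j : ℝ) + 1) * dx + dx / 2 = c j + dx + dx := by simp only [hcdef]; ring
    have e3 : (j : ℝ) * dx + dx / 2 = c j + dx := by simp only [hcdef]; ring
    have e4 : (j : ℝ) * dx - dx / 2 = c j := by simp only [hcdef]
    set X : ℝ := f (u n j) - signFlux f (kAvg k dx) (u n) j with hX
    set Y : ℝ := kAvg k dx j with hY
    set Z : ℝ → ℝ := fun t =>
      (((∫ x in (c j + dx)..(c j + dx + dx), φ (x, t)) -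
        ∫ x in (c j)..(c j + dx), φ (x, t)) / dx) with hZ
    have hTermeq : Term n j = ∫ t in ((n : ℝ) * dt)..(((n : ℝ) + 1) * dt), X * Y * Z t := by
      rw [hTermdef]
      simp only [e1, e2, e3, e4]
      rfl
    have hZc : Continuous Z := ((hPhic _ _).sub (hPhic _ _)).div_const dx
    have hintL : IntervalIntegrable (fun t => |X * Y * Z t|) volume
        ((n : ℝ) * dt) (((n : ℝ) + 1) * dt) :=
      ((continuous_const.mul hZc).abs).intervalIntegrable _ _
    have hintR : IntervalIntegrable
        (fun t => (Mk * Mf * Real.sqrt dx) * (|u n (j + 1) - u n j| * A j t)) volume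
        ((n : ℝ) * dt) (((n : ℝ) + 1) * dt) :=
      (continuous_const.mul (continuous_const.mul (hAc j))).intervalIntegrable _ _
    have hpt : ∀ t ∈ Set.Icc ((n : ℝ) * dt) (((n : ℝ) + 1) * dt),
        |X * Y * Z t| ≤ (Mk * Mf * Real.sqrt dx) * (|u n (j + 1) - u n j| * A j t) := by
      intro t _
      have hXb : |X| ≤ Mf * |u n (j + 1) - u n j| := eo_bound hf hdfb _ _ j
      have hYb : |Y| ≤ Mk := kAvg_bound hkb hdx j
      have hZb : |Z t| ≤ Real.sqrt dx * A j t := by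
        rw [hZ]
        simp only [abs_div, abs_of_pos hdx, div_le_iff₀ hdx]
        calc |(∫ x in (c j + dx)..(c j + dx + dx), φ (x, t)) -
              ∫ x in (c j)..(c j + dx), φ (x, t)|
            ≤ dx * Real.sqrt dx *
              Real.sqrt (∫ y in (c j)..(c j + 2 * dx), (deriv (fun z => φ (z, t)) y) ^ 2) :=
              phi_diff_bound hφ hdx (c j) t
          _ = Real.sqrt dx * A j t * dx := by rw [hAdef]; ring
      calc |X * Y * Z t| = |X| * |Y| * |Z t| := by rw [abs_mul, abs_mul]
        _ ≤ (Mf * |u n (j + 1) - u n j|) * Mk * (Real.sqrt dx * A j t) := by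
            refine mul_le_mul (mul_le_mul hXb hYb (abs_nonneg _) (by positivity)) hZb
              (abs_nonneg _) (by positivity)
        _ = (Mk * Mf * Real.sqrt dx) * (|u n (j + 1) - u n j| * A j t) := by ring
    calc |Term n j| = |∫ t in ((n : ℝ) * dt)..(((n : ℝ) + 1) * dt), X * Y * Z t| := by
          rw [hTermeq]
      _ ≤ ∫ t in ((n : ℝ) * dt)..(((n : ℝ) + 1) * dt), |X * Y * Z t| :=
          intervalIntegral.abs_integral_le_integral_abs htn
      _ ≤ ∫ t in ((n : ℝ) * dt)..(((n : ℝ) + 1) * dt),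
            (Mk * Mf * Real.sqrt dx) * (|u n (j + 1) - u n j| * A j t) :=
          intervalIntegral.integral_mono_on htn hintL hintR hpt
      _ = (Mk * Mf * Real.sqrt dx) *
            (|u n (j + 1) - u n j| * ∫ t in ((n : ℝ) * dt)..(((n : ℝ) + 1) * dt), A j t) := by
          rw [intervalIntegral.integral_const_mul, intervalIntegral.integral_const_mul]
  -- b-estimate
  have hbB : ∀ n ∈ Finset.range N, ∀ j ∈ F,
      (∫ t in ((n : ℝ) * dt)..(((n : ℝ) + 1) * dt), A j t)
        ≤ Real.sqrt dt * Real.sqrt (B n j) := by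
    intro n hn j hjF
    have htn : (n : ℝ) * dt ≤ ((n : ℝ) + 1) * dt := htle n
    have h2 := interval_cs (hAc j) htn
    have e : ((n : ℝ) + 1) * dt - (n : ℝ) * dt = dt := by ring
    rw [e] at h2
    have h3 : (∫ t in ((n : ℝ) * dt)..(((n : ℝ) + 1) * dt), (A j t) ^ 2) = B n j := by
      rw [hBdef]
      refine intervalIntegral.integral_congr fun t _ => ?_
      exact Real.sq_sqrt (intervalIntegral.integral_nonneg (by linarith) fun y _ => sq_nonneg _)
    rw [h3] at h2
    exact (le_abs_self _).trans h2
  -- a² estimate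
  have haS : ∀ n ∈ Finset.range N,
      (∑ j ∈ F, (u n (j + 1) - u n j) ^ 2)
        ≤ dx ^ 2 * ∑' j : ℤ, (Dm dx (u n) j) ^ 2 := by
    intro n hn
    have hDmeq : ∀ j : ℤ, u n (j + 1) - u n j = dx * Dm dx (u n) (j + 1) := by
      intro j
      unfold Dm
      rw [show j + 1 - 1 = j from by ring]
      field_simp
    calc (∑ j ∈ F, (u n (j + 1) - u n j) ^ 2)
        = ∑ j ∈ F, dx ^ 2 * (Dm dx (u n) (j + 1)) ^ 2 := by
          refine Finset.sum_congr rfl fun j _ => by rw [hDmeq j]; ring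
      _ = dx ^ 2 * ∑ j ∈ F, (Dm dx (u n) (j + 1)) ^ 2 := by rw [Finset.mul_sum]
      _ ≤ dx ^ 2 * ∑' j : ℤ, (Dm dx (u n) j) ^ 2 := by
          refine mul_le_mul_of_nonneg_left ?_ (by positivity)
          have himg : (∑ j ∈ F, (Dm dx (u n) (j + 1)) ^ 2)
              = ∑ j ∈ F.image (· + 1), (Dm dx (u n) j) ^ 2 := by
            rw [Finset.sum_image (by intro a _ b _ h; exact add_right_cancel h)]
          rw [himg]
          refine Summable.sum_le_tsum _ (fun j _ => sq_nonneg _) ?_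
          refine summable_of_ne_finset_zero (s := F) ?_
          intro j hj
          have hj' : ¬(-(J : ℤ) - 1 ≤ j ∧ j ≤ (J : ℤ) + 1) := by
            simpa [hFdef, Finset.mem_Icc] using hj
          have h0 : u n j = 0 :=
            hzero n (Finset.mem_range.1 hn) j (by rw [Int.abs_eq_natAbs]; omega)
          have h1 : u n (j - 1) = 0 :=
            hzero n (Finset.mem_range.1 hn) (j - 1) (by rw [Int.abs_eq_natAbs]; omega)
          simp [Dm, h0, h1]
  -- B sum estimate
  have hBsum : (∑ n ∈ Finset.range N, ∑ j ∈ F, B n j) ≤ 2 * I0 := by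
    have hgtc : ∀ t : ℝ, Continuous fun y => (g y t) ^ 2 := fun t =>
      hgsqc.comp (continuous_id.prodMk continuous_const)
    have hstep : ∀ n ∈ Finset.range N, (∑ j ∈ F, B n j)
        ≤ ∫ t in ((n : ℝ) * dt)..(((n : ℝ) + 1) * dt), 2 * W t := by
      intro n hn
      have hsum : (∑ j ∈ F, B n j) = ∫ t in ((n : ℝ) * dt)..(((n : ℝ) + 1) * dt),
          (∑ j ∈ F, ∫ y in (c j)..(c j + 2 * dx), (g y t) ^ 2) := by
        rw [hBdef]
        exact (intervalIntegral.integral_finset_sum fun j _ =>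
          (hwc _ _).intervalIntegrable _ _).symm
      rw [hsum]
      refine intervalIntegral.integral_mono_on (htle n) ?_ ?_ ?_
      · exact (continuous_finset_sum F fun j _ => hwc _ _).intervalIntegrable _ _
      · exact (continuous_const.mul hWc).intervalIntegrable _ _
      intro t _
      have hsplit : ∀ j : ℤ, (∫ y in (c j)..(c j + 2 * dx), (g y t) ^ 2)
          = (∫ y in Set.Ioc (c j) (c (j + 1)), (g y t) ^ 2)
            + ∫ y in Set.Ioc (c (j + 1)) (c (j + 1 + 1)), (g y t) ^ 2 := by
        intro j
        have hc2 : c j + 2 * dx = c (j + 1 + 1) := by simp only [hcdef]; push_cast; ring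
        have hI1 : IntervalIntegrable (fun y => (g y t) ^ 2) volume (c j) (c (j + 1)) :=
          (hgtc t).intervalIntegrable _ _
        have hI2 : IntervalIntegrable (fun y => (g y t) ^ 2) volume (c (j + 1)) (c (j + 1 + 1)) :=
          (hgtc t).intervalIntegrable _ _
        rw [hc2, ← intervalIntegral.integral_add_adjacent_intervals hI1 hI2,
          intervalIntegral.integral_of_le (hcmono.monotone (by omega)),
          intervalIntegral.integral_of_le (hcmono.monotone (by omega))]
      have hsub1 : ∀ j ∈ F, Set.Ioc (c j) (c (j + 1)) ⊆ Set.Ioc L R := by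
        intro j hj
        have hm := Finset.mem_Icc.1 hj
        exact Set.Ioc_subset_Ioc (hcmono.monotone (by omega)) (hcmono.monotone (by omega))
      have hsub2 : ∀ j ∈ F, Set.Ioc (c (j + 1)) (c (j + 1 + 1)) ⊆ Set.Ioc L R := by
        intro j hj
        have hm := Finset.mem_Icc.1 hj
        exact Set.Ioc_subset_Ioc (hcmono.monotone (by omega)) (hcmono.monotone (by omega))
      have hmono2 : StrictMono (fun j : ℤ => c (j + 1)) := fun a b hab =>
        hcmono (by omega)
      have hb1 := sum_Ioc_le (hgtc t) (fun x => sq_nonneg (g x t)) hcmono F hsub1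
      have hb2 := sum_Ioc_le (c := fun j : ℤ => c (j + 1)) (hgtc t)
        (fun x => sq_nonneg (g x t)) hmono2 F hsub2
      have hWset : (∫ x in Set.Ioc L R, (g x t) ^ 2) = W t :=
        (intervalIntegral.integral_of_le hLR).symm
      calc (∑ j ∈ F, ∫ y in (c j)..(c j + 2 * dx), (g y t) ^ 2)
          = (∑ j ∈ F, ∫ y in Set.Ioc (c j) (c (j + 1)), (g y t) ^ 2)
            + ∑ j ∈ F, ∫ y in Set.Ioc (c (j + 1)) (c (j + 1 + 1)), (g y t) ^ 2 := by
            rw [← Finset.sum_add_distrib]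
            exact Finset.sum_congr rfl fun j _ => hsplit j
        _ ≤ (∫ x in Set.Ioc L R, (g x t) ^ 2) + ∫ x in Set.Ioc L R, (g x t) ^ 2 :=
            add_le_add hb1 hb2
        _ = 2 * W t := by rw [hWset]; ring
    have hcast : ∀ m : ℕ, (((m + 1 : ℕ) : ℝ)) * dt = ((m : ℝ) + 1) * dt := by
      intro m; push_cast; ring
    have hadj := intervalIntegral.sum_integral_adjacent_intervals (μ := volume)
      (f := fun t => 2 * W t) (a := fun m : ℕ => (m : ℝ) * dt) (n := N)
      (fun m _ => (continuous_const.mul hWc).intervalIntegrable _ _)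
    have hWI : (∫ t in (0 : ℝ)..((N : ℝ) * dt), W t) ≤ I0 := by
      have h1 : (∫ t in (0 : ℝ)..((N : ℝ) * dt), W t) = ∫ t in Set.Ioc (0 : ℝ) T, W t := by
        rw [hTdef]
        exact intervalIntegral.integral_of_le (by positivity)
      have h2 : (∫ t in Set.Ioc (0 : ℝ) T, W t) = ∫ t in Set.Ioo (0 : ℝ) T, W t :=
        MeasureTheory.integral_Ioc_eq_integral_Ioo
      have h3 : (∫ t in Set.Ioo (0 : ℝ) T, W t)
          = ∫ t in Set.Ioo (0 : ℝ) T, ∫ x in Set.Ioc L R, (g x t) ^ 2 :=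
        MeasureTheory.integral_congr_ae (Filter.Eventually.of_forall fun t =>
          intervalIntegral.integral_of_le hLR)
      rw [h1, h2, h3]
      exact fubini_rect hgsqc (fun p => sq_nonneg _) hLR hT0 hGint
    calc (∑ n ∈ Finset.range N, ∑ j ∈ F, B n j)
        ≤ ∑ n ∈ Finset.range N, ∫ t in ((n : ℝ) * dt)..(((n : ℝ) + 1) * dt), 2 * W t :=
          Finset.sum_le_sum hstep
      _ = ∑ n ∈ Finset.range N, ∫ t in ((n : ℝ) * dt)..(((n + 1 : ℕ) : ℝ) * dt), 2 * W t := by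
          refine Finset.sum_congr rfl fun m _ => by rw [hcast m]
      _ = ∫ t in ((0 : ℕ) : ℝ) * dt..((N : ℝ) * dt), 2 * W t := hadj
      _ = 2 * ∫ t in (0 : ℝ)..((N : ℝ) * dt), W t := by
          rw [show (((0 : ℕ) : ℝ)) * dt = (0 : ℝ) by push_cast; ring]
          exact intervalIntegral.integral_const_mul 2 W
      _ ≤ 2 * I0 := by linarith [hWI]
  -- nonnegativity of sums
  have hSnn : 0 ≤ ∑ n ∈ Finset.range N, ∑' j : ℤ, (Dm dx (u n) j) ^ 2 := by
    refine Finset.sum_nonneg fun n _ => tsum_nonneg fun j => sq_nonneg _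
  -- main chain
  set S : ℝ := ∑ n ∈ Finset.range N, ∑' j : ℤ, (Dm dx (u n) j) ^ 2 with hSdef
  set s : Finset (ℕ × ℤ) := Finset.range N ×ˢ F with hsdef
  set a : ℕ × ℤ → ℝ := fun p => |u p.1 (p.2 + 1) - u p.1 p.2| with hadef
  set b : ℕ × ℤ → ℝ := fun p => Real.sqrt dt * Real.sqrt (B p.1 p.2) with hbdef
  have hsum_a : (∑ p ∈ s, (a p) ^ 2) ≤ dx ^ 2 * S := by
    rw [hsdef, Finset.sum_product]
    calc (∑ n ∈ Finset.range N, ∑ j ∈ F, (a (n, j)) ^ 2)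
        = ∑ n ∈ Finset.range N, ∑ j ∈ F, (u n (j + 1) - u n j) ^ 2 := by
          refine Finset.sum_congr rfl fun n _ => Finset.sum_congr rfl fun j _ => ?_
          simp [hadef, sq_abs]
      _ ≤ ∑ n ∈ Finset.range N, dx ^ 2 * ∑' j : ℤ, (Dm dx (u n) j) ^ 2 :=
          Finset.sum_le_sum haS
      _ = dx ^ 2 * S := by rw [hSdef, Finset.mul_sum]
  have hsum_b : (∑ p ∈ s, (b p) ^ 2) ≤ dt * (2 * I0) := by
    rw [hsdef, Finset.sum_product]
    calc (∑ n ∈ Finset.range N, ∑ j ∈ F, (b (n, j)) ^ 2)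
        = ∑ n ∈ Finset.range N, ∑ j ∈ F, dt * B n j := by
          refine Finset.sum_congr rfl fun n hn => Finset.sum_congr rfl fun j hj => ?_
          simp only [hbdef]
          rw [mul_pow, Real.sq_sqrt hdt.le, Real.sq_sqrt (hBnn n j)]
      _ = dt * ∑ n ∈ Finset.range N, ∑ j ∈ F, B n j := by
          rw [Finset.mul_sum]
          exact Finset.sum_congr rfl fun n _ => by rw [Finset.mul_sum]
      _ ≤ dt * (2 * I0) := mul_le_mul_of_nonneg_left hBsum hdt.le
  have hsqrt2 : Real.sqrt 2 ≤ 2 := by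
    nlinarith [Real.sq_sqrt (by norm_num : (0:ℝ) ≤ 2), Real.sqrt_nonneg (2:ℝ)]
  have hfinal : Real.sqrt (dx ^ 2 * S) * Real.sqrt (dt * (2 * I0))
      ≤ 2 * (Real.sqrt (dx ^ 2 * dt * S) * Real.sqrt I0) := by
    have e : (dx ^ 2 * S) * (dt * (2 * I0)) = 2 * ((dx ^ 2 * dt * S) * I0) := by ring
    have h1 : Real.sqrt (dx ^ 2 * S) * Real.sqrt (dt * (2 * I0))
        = Real.sqrt 2 * (Real.sqrt (dx ^ 2 * dt * S) * Real.sqrt I0) := by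
      rw [← Real.sqrt_mul (by positivity) (dt * (2 * I0)), e,
        Real.sqrt_mul (by norm_num : (0:ℝ) ≤ 2),
        Real.sqrt_mul (by positivity : (0:ℝ) ≤ dx ^ 2 * dt * S)]
    rw [h1]
    refine mul_le_mul_of_nonneg_right hsqrt2 (by positivity)
  calc |∑ n ∈ Finset.range N, ∑' j : ℤ, Term n j|
      = |∑ n ∈ Finset.range N, ∑ j ∈ F, Term n j| := by
        rw [Finset.sum_congr rfl hcollapse]
    _ ≤ ∑ n ∈ Finset.range N, ∑ j ∈ F, |Term n j| :=
        (Finset.abs_sum_le_sum_abs _ _).trans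
          (Finset.sum_le_sum fun n _ => Finset.abs_sum_le_sum_abs _ _)
    _ ≤ ∑ n ∈ Finset.range N, ∑ j ∈ F, (Mk * Mf * Real.sqrt dx) *
          (|u n (j + 1) - u n j| * ∫ t in ((n : ℝ) * dt)..(((n : ℝ) + 1) * dt), A j t) :=
        Finset.sum_le_sum fun n hn => Finset.sum_le_sum fun j hj => hTermBound n hn j hj
    _ ≤ ∑ n ∈ Finset.range N, ∑ j ∈ F, (Mk * Mf * Real.sqrt dx) *
          (|u n (j + 1) - u n j| * (Real.sqrt dt * Real.sqrt (B n j))) := by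
        refine Finset.sum_le_sum fun n hn => Finset.sum_le_sum fun j hj => ?_
        refine mul_le_mul_of_nonneg_left ?_ (by positivity)
        exact mul_le_mul_of_nonneg_left (hbB n hn j hj) (abs_nonneg _)
    _ = (Mk * Mf * Real.sqrt dx) * ∑ p ∈ s, a p * b p := by
        rw [hsdef, Finset.sum_product, Finset.mul_sum]
        exact Finset.sum_congr rfl fun n _ => by rw [Finset.mul_sum]
    _ ≤ (Mk * Mf * Real.sqrt dx) *
          (Real.sqrt (∑ p ∈ s, (a p) ^ 2) * Real.sqrt (∑ p ∈ s, (b p) ^ 2)) := by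
        refine mul_le_mul_of_nonneg_left (finset_cs s a b) (by positivity)
    _ ≤ (Mk * Mf * Real.sqrt dx) *
          (Real.sqrt (dx ^ 2 * S) * Real.sqrt (dt * (2 * I0))) := by
        refine mul_le_mul_of_nonneg_left ?_ (by positivity)
        exact mul_le_mul (Real.sqrt_le_sqrt hsum_a) (Real.sqrt_le_sqrt hsum_b)
          (Real.sqrt_nonneg _) (Real.sqrt_nonneg _)
    _ ≤ (Mk * Mf * Real.sqrt dx) * (2 * (Real.sqrt (dx ^ 2 * dt * S) * Real.sqrt I0)) := by
        refine mul_le_mul_of_nonneg_left hfinal (by positivity)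
    _ = 2 * Mk * Mf * Real.sqrt dx * Real.sqrt (dx ^ 2 * dt * S) * Real.sqrt I0 := by
        ring
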